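/- Let m ≥ 2. In MvPolynomial (Fin (m−1)) (ZMod 2), the family of m−1 polynomials p_k = e_k + e_{k−1}·e₁ for k = 2, 3, …, m is algebraically independent over ZMod 2, where eⱼ denotes the j-th elementary symmetric polynomial (MvPolynomial.esymm) in the m−1 variables, with the conventions e₀ = 1 and e_m = 0 (since there are only m−1 variables). -/

import Mathlib

open MvPolynomial Polynomial Function

/-- The auxiliary substitution polynomials: `g 0 = X 0`,
`g (j+1) = X (j+1) + g j * X 0` (for `j + 1 ≤ n'`). -/
noncomputable def gAux (n' : ℕ) : ℕ → MvPolynomial (Fin (n' + 1)) (ZMod 2)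
  | 0 => X 0
  | (j + 1) => (if h : j + 1 ≤ n' then X ⟨j + 1, by omega⟩ else 0) + gAux n' j * X 0

theorem gAux_monic (n' : ℕ) (j : ℕ) (hj : j ≤ n') :
    (MvPolynomial.finSuccEquiv (ZMod 2) n' (gAux n' j)).Monic ∧
      0 < (MvPolynomial.finSuccEquiv (ZMod 2) n' (gAux n' j)).degree := by
  induction j with
  | zero =>
      rw [show gAux n' 0 = X 0 from rfl, finSuccEquiv_X_zero]
      exact ⟨monic_X, by rw [degree_X]; exact zero_lt_one⟩
  | succ j ih =>
      obtain ⟨hm, hd⟩ := ih (by omega)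
      rw [gAux, dif_pos hj, map_add, map_mul, finSuccEquiv_X_zero,
        show (⟨j + 1, by omega⟩ : Fin (n' + 1)) = Fin.succ ⟨j, by omega⟩ from rfl,
        finSuccEquiv_X_succ]
      have hMX : (MvPolynomial.finSuccEquiv (ZMod 2) n' (gAux n' j) * Polynomial.X).Monic :=
        hm.mul monic_X
      have hdeg : (Polynomial.C (X (⟨j, by omega⟩ : Fin n')) : Polynomial (MvPolynomial (Fin n') (ZMod 2))).degree
          < (MvPolynomial.finSuccEquiv (ZMod 2) n' (gAux n' j) * Polynomial.X).degree := by
        refine lt_of_le_of_lt degree_C_le ?_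
        rw [degree_mul, degree_X]
        have hle : (MvPolynomial.finSuccEquiv (ZMod 2) n' (gAux n' j)).degree
            ≤ (MvPolynomial.finSuccEquiv (ZMod 2) n' (gAux n' j)).degree + 1 := by
          nth_rewrite 1 [← add_zero ((MvPolynomial.finSuccEquiv (ZMod 2) n' (gAux n' j)).degree)]
          exact add_le_add le_rfl zero_le_one
        exact lt_of_lt_of_le hd hle
      constructor
      · exact hMX.add_of_right hdeg
      · rw [degree_add_eq_right_of_degree_lt hdeg, degree_mul, degree_X]
        have hle : (MvPolynomial.finSuccEquiv (ZMod 2) n' (gAux n' j)).degree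
            ≤ (MvPolynomial.finSuccEquiv (ZMod 2) n' (gAux n' j)).degree + 1 := by
          nth_rewrite 1 [← add_zero ((MvPolynomial.finSuccEquiv (ZMod 2) n' (gAux n' j)).degree)]
          exact add_le_add le_rfl zero_le_one
        exact lt_of_lt_of_le hd hle

theorem w_indep (n' : ℕ) :
    AlgebraicIndependent (ZMod 2)
      (fun k : Fin (n' + 1) =>
        Fin.cases (gAux n' n' * X 0) (fun i : Fin n' => X i.succ) k :
        Fin (n' + 1) → MvPolynomial (Fin (n' + 1)) (ZMod 2)) := by
  set w : Fin (n' + 1) → MvPolynomial (Fin (n' + 1)) (ZMod 2) :=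
    fun k => Fin.cases (gAux n' n' * X 0) (fun i : Fin n' => X i.succ) k with hw
  set e := MvPolynomial.finSuccEquiv (ZMod 2) n' with he
  set H := e (gAux n' n' * X 0) with hH
  have hHmonic : H.Monic := by
    rw [hH, map_mul, finSuccEquiv_X_zero]
    exact (gAux_monic n' n' le_rfl).1.mul monic_X
  have hHdeg : H.natDegree ≠ 0 := by
    have : 0 < H.degree := by
      rw [hH, map_mul, finSuccEquiv_X_zero, degree_mul, degree_X]
      have hd := (gAux_monic n' n' le_rfl).2
      have hle : (e (gAux n' n')).degree ≤ (e (gAux n' n')).degree + 1 := by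
        nth_rewrite 1 [← add_zero ((e (gAux n' n')).degree)]
        exact add_le_add le_rfl zero_le_one
      exact lt_of_lt_of_le hd hle
    have := Polynomial.natDegree_pos_iff_degree_pos.mpr this
    omega
  have hHtrans : Transcendental (MvPolynomial (Fin n') (ZMod 2)) H :=
    Polynomial.transcendental H hHdeg (by rw [hHmonic.leadingCoeff]; exact one_mem _)
  have hHinj : Injective (Polynomial.aeval (R := MvPolynomial (Fin n') (ZMod 2)) H) :=
    transcendental_iff_injective.mp hHtrans
  have heq : (e : MvPolynomial (Fin (n' + 1)) (ZMod 2) →ₐ[ZMod 2] _).comp (aeval w) =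
      ((Polynomial.aeval (R := MvPolynomial (Fin n') (ZMod 2)) H).restrictScalars
        (ZMod 2)).comp (e : MvPolynomial (Fin (n' + 1)) (ZMod 2) →ₐ[ZMod 2] _) := by
    apply MvPolynomial.algHom_ext
    intro k
    induction k using Fin.cases with
    | zero =>
        simp only [AlgHom.comp_apply, MvPolynomial.aeval_X, AlgHom.coe_restrictScalars', AlgEquiv.coe_algHom]
        show e (gAux n' n' * X 0) = Polynomial.aeval H (e (X 0))
        rw [show e (X 0) = Polynomial.X from finSuccEquiv_X_zero, Polynomial.aeval_X, hH]
    | succ i =>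
        simp only [AlgHom.comp_apply, MvPolynomial.aeval_X, AlgHom.coe_restrictScalars', AlgEquiv.coe_algHom]
        show e (X i.succ) = Polynomial.aeval H (e (X i.succ))
        rw [show e (X i.succ) = Polynomial.C (X i) from finSuccEquiv_X_succ,
          Polynomial.aeval_C, Polynomial.algebraMap_eq]
  rw [algebraicIndependent_iff_injective_aeval]
  intro a b hab
  have h3 : ((e : MvPolynomial (Fin (n' + 1)) (ZMod 2) →ₐ[ZMod 2]
      (MvPolynomial (Fin n') (ZMod 2))[X]).comp (aeval w)) a = ((e : MvPolynomial (Fin (n' + 1))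
      (ZMod 2) →ₐ[ZMod 2] (MvPolynomial (Fin n') (ZMod 2))[X]).comp (aeval w)) b := by
    simp only [AlgHom.comp_apply]
    rw [hab]
  rw [heq] at h3
  simp only [AlgHom.comp_apply, AlgHom.coe_restrictScalars', AlgEquiv.coe_algHom] at h3
  exact e.injective (hHinj h3)

theorem key (n' : ℕ) :
    AlgebraicIndependent (ZMod 2)
      (fun k : Fin (n' + 1) =>
        esymm (Fin (n' + 1)) (ZMod 2) ((k : ℕ) + 2) +
          esymm (Fin (n' + 1)) (ZMod 2) ((k : ℕ) + 1) *
            esymm (Fin (n' + 1)) (ZMod 2) 1) := by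
  set q : Fin (n' + 1) → MvPolynomial (Fin (n' + 1)) (ZMod 2) := fun k =>
    (if h : (k : ℕ) + 2 ≤ n' + 1 then X ⟨(k : ℕ) + 1, by omega⟩ else 0) + X k * X 0 with hq
  set E : Fin (n' + 1) → MvPolynomial (Fin (n' + 1)) (ZMod 2) := fun i =>
    esymm (Fin (n' + 1)) (ZMod 2) ((i : ℕ) + 1) with hE
  have hEinj : Injective (MvPolynomial.aeval E :
      MvPolynomial (Fin (n' + 1)) (ZMod 2) →ₐ[ZMod 2] MvPolynomial (Fin (n' + 1)) (ZMod 2)) := by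
    intro a b hab
    apply esymmAlgHom_fin_injective (ZMod 2) (le_refl (n' + 1))
    apply Subtype.ext
    rw [esymmAlgHom_apply, esymmAlgHom_apply]
    exact hab
  have hzero : esymm (Fin (n' + 1)) (ZMod 2) (n' + 2) = 0 := by
    rw [esymm, Finset.powersetCard_eq_empty.mpr (by simp), Finset.sum_empty]
  have hfam : (fun k : Fin (n' + 1) =>
      esymm (Fin (n' + 1)) (ZMod 2) ((k : ℕ) + 2) +
        esymm (Fin (n' + 1)) (ZMod 2) ((k : ℕ) + 1) *
          esymm (Fin (n' + 1)) (ZMod 2) 1) = (MvPolynomial.aeval E) ∘ q := by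
    funext k
    simp only [comp_apply, hq, map_add, map_mul, MvPolynomial.aeval_X]
    by_cases h : (k : ℕ) + 2 ≤ n' + 1
    · rw [dif_pos h, MvPolynomial.aeval_X]
      rfl
    · rw [dif_neg h, map_zero]
      have hk : (k : ℕ) + 2 = n' + 2 := by omega
      rw [hk, hzero]
      rfl
  rw [hfam]
  suffices hqind : AlgebraicIndependent (ZMod 2) q by exact hqind.map' hEinj
  set fv : Fin (n' + 1) → MvPolynomial (Fin (n' + 1)) (ZMod 2) :=
    fun k => gAux n' (k : ℕ) with hfv
  apply AlgebraicIndependent.of_comp (MvPolynomial.aeval fv)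
  have hcomp : (MvPolynomial.aeval fv) ∘ q =
      (fun k : Fin (n' + 1) =>
        Fin.cases (gAux n' n' * X 0) (fun i : Fin n' => X i.succ) k) ∘ (finRotate (n' + 1)) := by
    funext k
    simp only [comp_apply, hq, map_add, map_mul, MvPolynomial.aeval_X]
    by_cases h : (k : ℕ) + 2 ≤ n' + 1
    · rw [dif_pos h, MvPolynomial.aeval_X]
      have hfv0 : fv 0 = X 0 := rfl
      have hfvk1 : fv ⟨(k : ℕ) + 1, by omega⟩ = X ⟨(k : ℕ) + 1, by omega⟩ + fv k * X 0 := by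
        show gAux n' ((k : ℕ) + 1) = _
        rw [gAux, dif_pos (by omega : (k : ℕ) + 1 ≤ n')]
      rw [hfv0, hfvk1, add_assoc, CharTwo.add_self_eq_zero, add_zero]
      have hrot : finRotate (n' + 1) k = Fin.succ ⟨(k : ℕ), by omega⟩ := by
        rw [finRotate_succ_apply]
        apply Fin.ext
        rw [Fin.val_add_one_of_lt (by rw [Fin.lt_iff_val_lt_val, Fin.val_last]; omega)]
        rfl
      rw [hrot, Fin.cases_succ]
      rfl
    · rw [dif_neg h, map_zero, zero_add]
      have hk : k = Fin.last n' := by apply Fin.ext; simp only [Fin.val_last]; omega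
      rw [hk, finRotate_last]
      have hfv0 : fv 0 = X 0 := rfl
      have hfvl : fv (Fin.last n') = gAux n' n' := by
        show gAux n' ((Fin.last n' : Fin (n' + 1)) : ℕ) = _
        rw [Fin.val_last]
      rw [hfv0, hfvl, Fin.cases_zero]
  rw [hcomp]
  exact (w_indep n').comp (finRotate (n' + 1)) (Equiv.injective _)

/-- In `(ZMod 2)[Y₀,…,Y_{m−2}]` (with `m ≥ 2`), the `m − 1` polynomials
`p_k = e_k + e_{k−1}·e₁` for `k = 2, …, m` are algebraically independent over
`ZMod 2`, where `eⱼ` is the `j`-th elementary symmetric polynomial in the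
`m − 1` variables (so `e₀ = 1` and `e_m = 0`). -/
theorem stmt7 (m : ℕ) (hm : 2 ≤ m) :
    AlgebraicIndependent (ZMod 2)
      (fun k : Fin (m - 1) =>
        esymm (Fin (m - 1)) (ZMod 2) ((k : ℕ) + 2) +
          esymm (Fin (m - 1)) (ZMod 2) ((k : ℕ) + 1) *
            esymm (Fin (m - 1)) (ZMod 2) 1) := by
  obtain ⟨n', rfl⟩ : ∃ n', m = n' + 2 := ⟨m - 2, by omega⟩
  exact key n'
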